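/- Let n ≥ 1. Let p : Fin n → ℝ with 0 < p i < 1 for all i. Let s : ℝ → ℝ satisfy 0 < s(a) ≤ 1 for every a > 0 and log∘s convex on (0,∞), and let ρ : ℝ → ℝ be nonnegative and convex on (0,∞). Let α, β : Fin n → ℝ be positive tuples with Σ_{i=1}^n α i = Σ_{i=1}^n β i and, for every k = 1,…,n, the sum of the k smallest entries of α at most the sum of the k smallest entries of β (i.e. α majorizes β). Set B_α = ∏_{i=1}^n p i·s(α i) and B_β = ∏_{i=1}^n p i·s(β i) (both lie in (0,1)). Then B_α·(Σ_{i=1}^n ρ(α i))/(1 − B_α) ≥ B_β·(Σ_{i=1}^n ρ(β i))/(1 − B_β). -/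

import Mathlib

open Finset

/-- Sum of the `k` smallest entries of the tuple `a`. -/
noncomputable def kSmallestSum {n : ℕ} (a : Fin n → ℝ) (k : ℕ) : ℝ :=
  ∑ i ∈ Finset.univ.filter (fun i : Fin n => (i : ℕ) < k), a (Tuple.sort a i)

private lemma slope_symm (f : ℝ → ℝ) (x y : ℝ) :
    (f y - f x) / (y - x) = (f x - f y) / (x - y) := by
  rw [← neg_div_neg_eq]; ring_nf

private lemma slope_mono_ord {f : ℝ → ℝ} (hf : ConvexOn ℝ (Set.Ioi 0) f)
    {a1 b1 a2 b2 : ℝ} (ha1 : 0 < a1) (hb1 : 0 < b1) (ha2 : 0 < a2) (hb2 : 0 < b2)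
    (h1 : a1 < b1) (h2 : a2 < b2) (ha : a1 ≤ a2) (hb : b1 ≤ b2) :
    (f b1 - f a1) / (b1 - a1) ≤ (f b2 - f a2) / (b2 - a2) := by
  have step1 : (f b1 - f a1) / (b1 - a1) ≤ (f b2 - f a1) / (b2 - a1) :=
    hf.secant_mono (Set.mem_Ioi.2 ha1) (Set.mem_Ioi.2 hb1) (Set.mem_Ioi.2 hb2)
      (ne_of_gt h1) (ne_of_gt (lt_of_lt_of_le h1 hb)) hb
  have step2 : (f a1 - f b2) / (a1 - b2) ≤ (f a2 - f b2) / (a2 - b2) :=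
    hf.secant_mono (Set.mem_Ioi.2 hb2) (Set.mem_Ioi.2 ha1) (Set.mem_Ioi.2 ha2)
      (ne_of_lt (lt_of_lt_of_le h1 hb)) (ne_of_lt h2) ha
  rw [slope_symm f b2 a1] at step2
  rw [slope_symm f b2 a2] at step2
  linarith

private lemma slope_pair_mono {f : ℝ → ℝ} (hf : ConvexOn ℝ (Set.Ioi 0) f)
    {x1 y1 x2 y2 : ℝ} (hx1 : 0 < x1) (hy1 : 0 < y1) (hx2 : 0 < x2) (hy2 : 0 < y2)
    (hx : x1 ≤ x2) (hy : y1 ≤ y2) (h1 : x1 ≠ y1) (h2 : x2 ≠ y2) :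
    (f y1 - f x1) / (y1 - x1) ≤ (f y2 - f x2) / (y2 - x2) := by
  rcases lt_or_gt_of_ne h1 with hlt1 | hgt1 <;>
    rcases lt_or_gt_of_ne h2 with hlt2 | hgt2
  · exact slope_mono_ord hf hx1 hy1 hx2 hy2 hlt1 hlt2 hx hy
  · rw [slope_symm f x2 y2]
    exact slope_mono_ord hf hx1 hy1 hy2 hx2 hlt1 hgt2 (le_of_lt (lt_of_lt_of_le hlt1 hy))
      (le_of_lt (lt_of_le_of_lt hy hgt2))
  · rw [slope_symm f x1 y1]
    exact slope_mono_ord hf hy1 hx1 hx2 hy2 hgt1 hlt2 (le_of_lt (lt_of_lt_of_le hgt1 hx))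
      (le_of_lt (lt_of_le_of_lt hx hlt2))
  · rw [slope_symm f x1 y1, slope_symm f x2 y2]
    exact slope_mono_ord hf hy1 hx1 hy2 hx2 hgt1 hgt2 hy hx

private lemma abel_nonneg {n : ℕ} {c g : ℕ → ℝ} (hc : ∀ i, i + 1 < n → c i ≤ c (i + 1))
    (hS : ∀ k, k ≤ n → ∑ j ∈ range k, g j ≤ 0) (htot : ∑ j ∈ range n, g j = 0) :
    0 ≤ ∑ i ∈ range n, c i * g i := by
  have hb := Finset.sum_range_by_parts c g n
  simp only [smul_eq_mul] at hb
  rw [hb, htot, mul_zero, zero_sub, le_neg, neg_zero]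
  apply Finset.sum_nonpos
  intro i hi
  have hi' : i + 1 < n := by
    have := Finset.mem_range.1 hi; omega
  exact mul_nonpos_of_nonneg_of_nonpos (by linarith [hc i hi']) (hS (i + 1) (le_of_lt hi'))

private lemma schur_nat (n : ℕ) {f : ℝ → ℝ} (hf : ConvexOn ℝ (Set.Ioi 0) f)
    (A B : ℕ → ℝ)
    (hApos : ∀ i, i < n → 0 < A i) (hBpos : ∀ i, i < n → 0 < B i)
    (hAmono : ∀ i j, i ≤ j → j < n → A i ≤ A j)
    (hBmono : ∀ i j, i ≤ j → j < n → B i ≤ B j)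
    (hpart : ∀ k, k ≤ n → ∑ i ∈ range k, A i ≤ ∑ i ∈ range k, B i)
    (htot : ∑ i ∈ range n, A i = ∑ i ∈ range n, B i) :
    ∑ i ∈ range n, f (B i) ≤ ∑ i ∈ range n, f (A i) := by
  classical
  set T : Finset ℕ := (range n).filter (fun i => A i ≠ B i) with hT
  by_cases hTe : T = ∅
  · apply le_of_eq
    apply Finset.sum_congr rfl
    intro i hi
    have hiAB : A i = B i := by
      by_contra h
      exact (Finset.eq_empty_iff_forall_notMem.1 hTe i) (Finset.mem_filter.2 ⟨hi, h⟩)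
    rw [hiAB]
  · have hTne : T.Nonempty := Finset.nonempty_iff_ne_empty.2 hTe
    set d : ℕ → ℝ := fun i => (f (A i) - f (B i)) / (A i - B i) with hd
    set c : ℕ → ℝ := fun i =>
      if h : (T.filter (· ≤ i)).Nonempty then (T.filter (· ≤ i)).sup' h d
      else T.inf' hTne d with hc
    have hdmono : ∀ i j, i ∈ T → j ∈ T → i ≤ j → d i ≤ d j := by
      intro i j hiT hjT hij
      rw [hT, Finset.mem_filter, Finset.mem_range] at hiT hjT
      exact slope_pair_mono hf (hBpos i hiT.1) (hApos i hiT.1) (hBpos j hjT.1)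
        (hApos j hjT.1) (hBmono i j hij hjT.1) (hAmono i j hij hjT.1)
        (Ne.symm hiT.2) (Ne.symm hjT.2)
    have hsub : ∀ i j : ℕ, i ≤ j → T.filter (· ≤ i) ⊆ T.filter (· ≤ j) := by
      intro i j hij
      apply Finset.monotone_filter_right
      intro x _ hx
      exact le_trans hx hij
    have hcmono : ∀ i j, i ≤ j → c i ≤ c j := by
      intro i j hij
      simp only [hc]
      by_cases hi : (T.filter (· ≤ i)).Nonempty
      · have hj : (T.filter (· ≤ j)).Nonempty := hi.mono (hsub i j hij)
        rw [dif_pos hi, dif_pos hj]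
        apply Finset.sup'_le
        intro b hb
        exact Finset.le_sup' d (hsub i j hij hb)
      · rw [dif_neg hi]
        by_cases hj : (T.filter (· ≤ j)).Nonempty
        · rw [dif_pos hj]
          obtain ⟨b, hb⟩ := hj
          calc T.inf' hTne d ≤ d b := Finset.inf'_le d (Finset.mem_filter.1 hb).1
            _ ≤ _ := Finset.le_sup' d hb
        · rw [dif_neg hj]
    have hckey : ∀ i, i ∈ T → c i = d i := by
      intro i hiT
      have hmem : i ∈ T.filter (· ≤ i) := Finset.mem_filter.2 ⟨hiT, le_refl i⟩
      have hne : (T.filter (· ≤ i)).Nonempty := ⟨i, hmem⟩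
      simp only [hc]
      rw [dif_pos hne]
      apply le_antisymm
      · apply Finset.sup'_le
        intro b hb
        have hb' := Finset.mem_filter.1 hb
        exact hdmono b i hb'.1 hiT hb'.2
      · exact Finset.le_sup' d hmem
    have hkey : ∀ i, i < n → f (A i) - f (B i) = c i * (A i - B i) := by
      intro i hi
      by_cases hAB : A i = B i
      · rw [hAB]; simp
      · have hiT : i ∈ T := Finset.mem_filter.2 ⟨Finset.mem_range.2 hi, hAB⟩
        rw [hckey i hiT]
        simp only [hd]
        rw [div_mul_cancel₀]
        exact sub_ne_zero_of_ne hAB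
    have h1 : ∑ i ∈ range n, (f (A i) - f (B i)) = ∑ i ∈ range n, c i * (A i - B i) :=
      Finset.sum_congr rfl fun i hi => hkey i (Finset.mem_range.1 hi)
    have h2 : 0 ≤ ∑ i ∈ range n, c i * (A i - B i) := by
      apply abel_nonneg (fun i hi => hcmono i (i + 1) (Nat.le_succ i))
      · intro k hk
        rw [Finset.sum_sub_distrib]
        linarith [hpart k hk]
      · rw [Finset.sum_sub_distrib]
        linarith [htot]
    rw [Finset.sum_sub_distrib] at h1
    linarith

/-- Theorem 3.14: smallest claim amounts, reversed hazard rate order,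
majorized severity parameters. -/
theorem stmt_14 {n : ℕ} (hn : 1 ≤ n) (s ρ : ℝ → ℝ)
    (p : Fin n → ℝ) (hp : ∀ i, 0 < p i ∧ p i < 1)
    (hs_pos : ∀ a > 0, 0 < s a) (hs_le : ∀ a > 0, s a ≤ 1)
    (hs_logconv : ConvexOn ℝ (Set.Ioi 0) (fun a => Real.log (s a)))
    (hρ_nonneg : ∀ a > 0, 0 ≤ ρ a)
    (hρ_conv : ConvexOn ℝ (Set.Ioi 0) ρ)
    (α β : Fin n → ℝ)
    (hα : ∀ i, 0 < α i) (hβ : ∀ i, 0 < β i)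
    (hsum : ∑ i, α i = ∑ i, β i)
    (hmaj : ∀ k, 1 ≤ k → k ≤ n → kSmallestSum α k ≤ kSmallestSum β k) :
    (∏ i, p i * s (β i)) * (∑ i, ρ (β i)) / (1 - ∏ i, p i * s (β i)) ≤
      (∏ i, p i * s (α i)) * (∑ i, ρ (α i)) / (1 - ∏ i, p i * s (α i)) := by
  classical
  set A : ℕ → ℝ := fun i => if h : i < n then α (Tuple.sort α ⟨i, h⟩) else 1 with hA
  set B : ℕ → ℝ := fun i => if h : i < n then β (Tuple.sort β ⟨i, h⟩) else 1 with hB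
  -- generic facts about the sorted tuples
  have hfilter : ∀ k : ℕ, k ≤ n → (range n).filter (· < k) = range k := by
    intro k hk
    ext x
    simp only [Finset.mem_filter, Finset.mem_range]
    omega
  have hks : ∀ (γ : Fin n → ℝ) (C : ℕ → ℝ),
      (∀ i : ℕ, C i = if h : i < n then γ (Tuple.sort γ ⟨i, h⟩) else 1) →
      ∀ k : ℕ, k ≤ n → kSmallestSum γ k = ∑ i ∈ range k, C i := by
    intro γ C hC k hk
    unfold kSmallestSum
    rw [Finset.sum_filter]
    have : ∀ i : Fin n, (if (i : ℕ) < k then γ (Tuple.sort γ i) else 0)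
        = (fun j : ℕ => if j < k then C j else 0) (i : ℕ) := by
      intro i
      simp only [hC, i.isLt, dif_pos, Fin.eta]
    rw [Finset.sum_congr rfl (fun i _ => this i),
      Fin.sum_univ_eq_sum_range (fun j : ℕ => if j < k then C j else 0) n,
      ← Finset.sum_filter, hfilter k hk]
  have hAks := hks α A (fun i => rfl)
  have hBks := hks β B (fun i => rfl)
  have htotgen : ∀ (γ : Fin n → ℝ) (C : ℕ → ℝ),
      (∀ i : ℕ, C i = if h : i < n then γ (Tuple.sort γ ⟨i, h⟩) else 1) →
      ∀ g : ℝ → ℝ, ∑ i ∈ range n, g (C i) = ∑ i, g (γ i) := by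
    intro γ C hC g
    have h1 : ∀ i : Fin n, g (γ (Tuple.sort γ i)) = (fun j : ℕ => g (C j)) (i : ℕ) := by
      intro i
      simp only [hC, i.isLt, dif_pos, Fin.eta]
    rw [← Fin.sum_univ_eq_sum_range (fun j : ℕ => g (C j)) n,
      ← Finset.sum_congr rfl (fun i _ => h1 i)]
    exact Equiv.sum_comp (Tuple.sort γ) (fun i => g (γ i))
  have hAtot := htotgen α A (fun i => rfl)
  have hBtot := htotgen β B (fun i => rfl)
  have hApos : ∀ i, i < n → 0 < A i := by
    intro i hi; simp only [hA, dif_pos hi]; exact hα _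
  have hBpos : ∀ i, i < n → 0 < B i := by
    intro i hi; simp only [hB, dif_pos hi]; exact hβ _
  have hAmono : ∀ i j, i ≤ j → j < n → A i ≤ A j := by
    intro i j hij hj
    have hi : i < n := lt_of_le_of_lt hij hj
    simp only [hA, dif_pos hi, dif_pos hj]
    exact Tuple.monotone_sort α (show (⟨i, hi⟩ : Fin n) ≤ ⟨j, hj⟩ from hij)
  have hBmono : ∀ i j, i ≤ j → j < n → B i ≤ B j := by
    intro i j hij hj
    have hi : i < n := lt_of_le_of_lt hij hj
    simp only [hB, dif_pos hi, dif_pos hj]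
    exact Tuple.monotone_sort β (show (⟨i, hi⟩ : Fin n) ≤ ⟨j, hj⟩ from hij)
  have hpart : ∀ k, k ≤ n → ∑ i ∈ range k, A i ≤ ∑ i ∈ range k, B i := by
    intro k hk
    rcases Nat.eq_zero_or_pos k with rfl | hk1
    · simp
    · rw [← hAks k hk, ← hBks k hk]
      exact hmaj k hk1 hk
  have htot : ∑ i ∈ range n, A i = ∑ i ∈ range n, B i := by
    have h1 := htotgen α A (fun i => rfl) id
    have h2 := htotgen β B (fun i => rfl) id
    simp only [id] at h1 h2
    rw [h1, h2]; exact hsum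
  -- Schur inequalities
  have hρineq : ∑ i, ρ (β i) ≤ ∑ i, ρ (α i) := by
    rw [← hAtot ρ, ← hBtot ρ]
    exact schur_nat n hρ_conv A B hApos hBpos hAmono hBmono hpart htot
  have hlogineq : ∑ i, Real.log (s (β i)) ≤ ∑ i, Real.log (s (α i)) := by
    rw [← hAtot (fun a => Real.log (s a)), ← hBtot (fun a => Real.log (s a))]
    exact schur_nat n hs_logconv A B hApos hBpos hAmono hBmono hpart htot
  -- product comparison
  have hsprod : ∏ i, s (β i) ≤ ∏ i, s (α i) := by
    have h := Real.exp_le_exp.2 hlogineq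
    rw [Real.exp_sum, Real.exp_sum] at h
    have e1 : ∀ i : Fin n, Real.exp (Real.log (s (β i))) = s (β i) := fun i =>
      Real.exp_log (hs_pos _ (hβ i))
    have e2 : ∀ i : Fin n, Real.exp (Real.log (s (α i))) = s (α i) := fun i =>
      Real.exp_log (hs_pos _ (hα i))
    rwa [Finset.prod_congr rfl (fun i _ => e1 i),
      Finset.prod_congr rfl (fun i _ => e2 i)] at h
  have hprodle : ∏ i, p i * s (β i) ≤ ∏ i, p i * s (α i) := by
    rw [Finset.prod_mul_distrib, Finset.prod_mul_distrib]
    exact mul_le_mul_of_nonneg_left hsprod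
      (Finset.prod_nonneg fun i _ => (hp i).1.le)
  have hβprodpos : 0 < ∏ i, p i * s (β i) :=
    Finset.prod_pos fun i _ => mul_pos (hp i).1 (hs_pos _ (hβ i))
  have hαprodlt : ∏ i, p i * s (α i) < 1 := by
    have hne : (Finset.univ : Finset (Fin n)).Nonempty :=
      ⟨⟨0, hn⟩, Finset.mem_univ _⟩
    calc ∏ i, p i * s (α i) < ∏ _i : Fin n, (1 : ℝ) := by
          apply Finset.prod_lt_prod_of_nonempty
            (fun i _ => mul_pos (hp i).1 (hs_pos _ (hα i)))
            (fun i _ => ?_) hne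
          calc p i * s (α i) ≤ p i * 1 :=
                mul_le_mul_of_nonneg_left (hs_le _ (hα i)) (hp i).1.le
            _ = p i := mul_one _
            _ < 1 := (hp i).2
      _ = 1 := Finset.prod_const_one
  have hρβnonneg : 0 ≤ ∑ i, ρ (β i) := Finset.sum_nonneg fun i _ => hρ_nonneg _ (hβ i)
  -- final arithmetic
  set x := ∏ i, p i * s (β i)
  set y := ∏ i, p i * s (α i)
  set u := ∑ i, ρ (β i)
  set v := ∑ i, ρ (α i)
  have hxy : x ≤ y := hprodle
  have hy1 : y < 1 := hαprodlt
  have hx0 : 0 < x := hβprodpos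
  have h1x : 0 < 1 - x := by linarith
  have h1y : 0 < 1 - y := by linarith
  rw [div_le_div_iff₀ h1x h1y]
  have h1 : x * (1 - y) ≤ y * (1 - x) := by nlinarith
  have h2 : x * (1 - y) * u ≤ y * (1 - x) * u := mul_le_mul_of_nonneg_right h1 hρβnonneg
  have h3 : y * (1 - x) * u ≤ y * (1 - x) * v := by
    apply mul_le_mul_of_nonneg_left hρineq
    nlinarith
  nlinarith
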